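/- Fix a ≥ 0, b ≥ 0, and let f : ℝ² → ℝ be measurable with 0 ≤ f(k) ≤ 1 for all k and such that k ↦ ε(k)·f(k) is integrable over ℝ². Then lim_{μ → +∞} ∫_{ℝ²} λ(ε(k), exp(−μ/k_BT); a, b; f(k)) dk = +∞. -/

import Mathlib

/-- `ψ(ε,ξ;a,b) = (a+1)(ε+b)/(1 + ξ·e^{(ε+b)/k_BT}) + a[ε−b]₊/(1 + ξ·e^{[ε−b]₊/k_BT})`. -/
noncomputable def psi (kBT ε ξ a b : ℝ) : ℝ :=
  (a + 1) * (ε + b) / (1 + ξ * Real.exp ((ε + b) / kBT)) +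
    a * max (ε - b) 0 / (1 + ξ * Real.exp (max (ε - b) 0 / kBT))

/-- `λ(ε,ξ;a,b;φ) = ψ(ε,ξ;a,b)·(1 − φ·(1 + ξ·e^{ε/k_BT}))`. -/
noncomputable def lam (kBT ε ξ a b φ : ℝ) : ℝ :=
  psi kBT ε ξ a b * (1 - φ * (1 + ξ * Real.exp (ε / kBT)))


open MeasureTheory Filter Real

section PointwiseLemmas

variable {kBT ε ξ a b φ : ℝ}

lemma psi_nonneg (hε : 0 ≤ ε) (hξ : 0 ≤ ξ) (ha : 0 ≤ a) (hb : 0 ≤ b) :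
    0 ≤ psi kBT ε ξ a b := by
  unfold psi
  have h1 : (0:ℝ) < 1 + ξ * Real.exp ((ε + b) / kBT) := by positivity
  have h2 : (0:ℝ) < 1 + ξ * Real.exp (max (ε - b) 0 / kBT) := by positivity
  have hm : (0:ℝ) ≤ max (ε - b) 0 := le_max_right _ _
  have : (0:ℝ) ≤ (a + 1) * (ε + b) := by positivity
  have : (0:ℝ) ≤ a * max (ε - b) 0 := by positivity
  positivity

lemma psi_mul_le (hkBT : 0 < kBT) (hε : 0 ≤ ε) (hξ : 0 < ξ) (ha : 0 ≤ a) (hb : 0 ≤ b) :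
    psi kBT ε ξ a b * (1 + ξ * Real.exp (ε / kBT)) ≤
      ((a + 1) + a * Real.exp (b / kBT)) * ε + (a + 1) * b := by
  set m := max (ε - b) 0 with hmdef
  have hm0 : 0 ≤ m := le_max_right _ _
  have hmε : m ≤ ε := max_le (by linarith) hε
  have hεm : ε ≤ m + b := by
    have := le_max_left (ε - b) 0
    linarith [this.trans_eq hmdef.symm]
  set E0 := Real.exp (ε / kBT)
  set E1 := Real.exp ((ε + b) / kBT)
  set E2 := Real.exp (m / kBT)
  set eb := Real.exp (b / kBT)
  have hE0 : 0 < E0 := Real.exp_pos _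
  have hE1 : 0 < E1 := Real.exp_pos _
  have hE2 : 0 < E2 := Real.exp_pos _
  have heb : 0 < eb := Real.exp_pos _
  have heb1 : 1 ≤ eb := Real.one_le_exp (by positivity)
  have hE01 : E0 ≤ E1 := Real.exp_le_exp.mpr (by gcongr; linarith)
  have hE0eb2 : E0 ≤ eb * E2 := by
    rw [← Real.exp_add]
    exact Real.exp_le_exp.mpr (by rw [← add_div]; gcongr; linarith)
  have hd1 : (0:ℝ) < 1 + ξ * E1 := by positivity
  have hd2 : (0:ℝ) < 1 + ξ * E2 := by positivity
  set q1 := (a + 1) * (ε + b) / (1 + ξ * E1) with hq1def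
  set q2 := a * m / (1 + ξ * E2) with hq2def
  have hpsi : psi kBT ε ξ a b = q1 + q2 := rfl
  have hq1d : q1 * (1 + ξ * E1) = (a + 1) * (ε + b) := div_mul_cancel₀ _ hd1.ne'
  have hq2d : q2 * (1 + ξ * E2) = a * m := div_mul_cancel₀ _ hd2.ne'
  have hq1 : 0 ≤ q1 := div_nonneg (by positivity) hd1.le
  have hq2 : 0 ≤ q2 := div_nonneg (by positivity) hd2.le
  have hd01 : 1 + ξ * E0 ≤ 1 + ξ * E1 := by nlinarith
  have hd02 : 1 + ξ * E0 ≤ eb * (1 + ξ * E2) := by nlinarith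
  rw [hpsi]
  have h1 := mul_le_mul_of_nonneg_left hd01 hq1
  have h2 := mul_le_mul_of_nonneg_left hd02 hq2
  have hq2deb : eb * (q2 * (1 + ξ * E2)) = eb * (a * m) := by rw [hq2d]
  have h3 : eb * (a * m) ≤ eb * (a * ε) :=
    mul_le_mul_of_nonneg_left (mul_le_mul_of_nonneg_left hmε ha) heb.le
  nlinarith [h1, h2, hq1d, hq2deb, h3]

lemma psi_le (hkBT : 0 < kBT) (hε : 0 ≤ ε) (hξ : 0 < ξ) (ha : 0 ≤ a) (hb : 0 ≤ b) :
    psi kBT ε ξ a b ≤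
      (((a + 1) + a * Real.exp (b / kBT)) * ε + (a + 1) * b) * Real.exp (-(ε / kBT)) / ξ := by
  rw [le_div_iff₀ hξ]
  set m := max (ε - b) 0 with hmdef
  have hm0 : 0 ≤ m := le_max_right _ _
  have hmε : m ≤ ε := max_le (by linarith) hε
  have hεm : ε ≤ m + b := by
    have := le_max_left (ε - b) 0
    linarith [this.trans_eq hmdef.symm]
  set E0 := Real.exp (ε / kBT)
  set E1 := Real.exp ((ε + b) / kBT)
  set E2 := Real.exp (m / kBT)
  set eb := Real.exp (b / kBT)
  set em := Real.exp (-(ε / kBT))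
  have hE0 : 0 < E0 := Real.exp_pos _
  have hE1 : 0 < E1 := Real.exp_pos _
  have hE2 : 0 < E2 := Real.exp_pos _
  have heb : 0 < eb := Real.exp_pos _
  have hem : (0:ℝ) ≤ em := (Real.exp_pos _).le
  have heb1 : 1 ≤ eb := Real.one_le_exp (by positivity)
  have hE0em : E0 * em = 1 := by rw [← Real.exp_add]; simp
  have hE01 : E0 ≤ E1 := Real.exp_le_exp.mpr (by gcongr; linarith)
  have hE0eb2 : E0 ≤ eb * E2 := by
    rw [← Real.exp_add]
    exact Real.exp_le_exp.mpr (by rw [← add_div]; gcongr; linarith)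
  have hd1 : (0:ℝ) < 1 + ξ * E1 := by positivity
  have hd2 : (0:ℝ) < 1 + ξ * E2 := by positivity
  set q1 := (a + 1) * (ε + b) / (1 + ξ * E1) with hq1def
  set q2 := a * m / (1 + ξ * E2) with hq2def
  have hpsi : psi kBT ε ξ a b = q1 + q2 := rfl
  have hq1d : q1 * (1 + ξ * E1) = (a + 1) * (ε + b) := div_mul_cancel₀ _ hd1.ne'
  have hq2d : q2 * (1 + ξ * E2) = a * m := div_mul_cancel₀ _ hd2.ne'
  have hq1 : 0 ≤ q1 := div_nonneg (by positivity) hd1.le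
  have hq2 : 0 ≤ q2 := div_nonneg (by positivity) hd2.le
  have hd1ξ : ξ * E0 ≤ 1 + ξ * E1 := by nlinarith
  have hd2ξ : ξ * E0 ≤ eb * (1 + ξ * E2) := by nlinarith
  have h1 : q1 * ξ ≤ (a + 1) * (ε + b) * em := by
    have p1 := mul_le_mul_of_nonneg_left hd1ξ (mul_nonneg hq1 hem)
    have e1 : q1 * ξ = q1 * em * (ξ * E0) := by
      rw [show q1 * em * (ξ * E0) = q1 * ξ * (E0 * em) by ring, hE0em, mul_one]
    have e2 : q1 * em * (1 + ξ * E1) = (a + 1) * (ε + b) * em := by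
      rw [show q1 * em * (1 + ξ * E1) = q1 * (1 + ξ * E1) * em by ring, hq1d]
    linarith
  have h2 : q2 * ξ ≤ a * ε * eb * em := by
    have p1 := mul_le_mul_of_nonneg_left hd2ξ (mul_nonneg hq2 hem)
    have e1 : q2 * ξ = q2 * em * (ξ * E0) := by
      rw [show q2 * em * (ξ * E0) = q2 * ξ * (E0 * em) by ring, hE0em, mul_one]
    have e2 : q2 * em * (eb * (1 + ξ * E2)) = eb * em * (a * m) := by
      rw [show q2 * em * (eb * (1 + ξ * E2)) = q2 * (1 + ξ * E2) * (eb * em) by ring, hq2d]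
      ring
    have p2 : eb * em * (a * m) ≤ eb * em * (a * ε) :=
      mul_le_mul_of_nonneg_left (mul_le_mul_of_nonneg_left hmε ha)
        (mul_nonneg heb.le hem)
    nlinarith
  calc psi kBT ε ξ a b * ξ = q1 * ξ + q2 * ξ := by rw [hpsi]; ring
    _ ≤ (a + 1) * (ε + b) * em + a * ε * eb * em := add_le_add h1 h2
    _ = (((a + 1) + a * eb) * ε + (a + 1) * b) * em := by ring

lemma lam_ge (hkBT : 0 < kBT) (hε : 0 ≤ ε) (hξ : 0 < ξ) (ha : 0 ≤ a) (hb : 0 ≤ b)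
    (hφ0 : 0 ≤ φ) :
    psi kBT ε ξ a b - φ * (((a + 1) + a * Real.exp (b / kBT)) * ε + (a + 1) * b) ≤
      lam kBT ε ξ a b φ := by
  unfold lam
  nlinarith [mul_le_mul_of_nonneg_left (psi_mul_le hkBT hε hξ ha hb) hφ0]

lemma abs_lam_le (hkBT : 0 < kBT) (hε : 0 ≤ ε) (hξ : 0 < ξ) (ha : 0 ≤ a) (hb : 0 ≤ b)
    (hφ0 : 0 ≤ φ) (hφ1 : φ ≤ 1) :
    |lam kBT ε ξ a b φ| ≤
      psi kBT ε ξ a b + φ * (((a + 1) + a * Real.exp (b / kBT)) * ε + (a + 1) * b) := by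
  have hψ := psi_nonneg (kBT := kBT) hε hξ.le ha hb
  have hC : 0 ≤ ((a + 1) + a * Real.exp (b / kBT)) * ε + (a + 1) * b := by positivity
  rw [abs_le]
  constructor
  · have := lam_ge (φ := φ) hkBT hε hξ ha hb hφ0
    nlinarith [mul_nonneg hφ0 hC]
  · have hlam_le : lam kBT ε ξ a b φ ≤ psi kBT ε ξ a b := by
      unfold lam
      nlinarith [mul_nonneg hφ0 (by positivity : (0:ℝ) ≤ ξ * Real.exp (ε / kBT)),
        mul_nonneg hψ (mul_nonneg hφ0 (by positivity : (0:ℝ) ≤ 1 + ξ * Real.exp (ε / kBT)))]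
    nlinarith [mul_nonneg hφ0 hC]

lemma psi_lb (hε : 0 ≤ ε) (hξ : 0 ≤ ξ) (ha : 0 ≤ a) (hb : 0 ≤ b)
    (hsmall : ξ * Real.exp ((ε + b) / kBT) ≤ 1) :
    (a + 1) * (ε + b) / 2 ≤ psi kBT ε ξ a b := by
  unfold psi
  have hd1 : (0:ℝ) < 1 + ξ * Real.exp ((ε + b) / kBT) := by positivity
  have hd2 : (0:ℝ) < 1 + ξ * Real.exp (max (ε - b) 0 / kBT) := by positivity
  have hm : (0:ℝ) ≤ max (ε - b) 0 := le_max_right _ _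
  have h2 : 1 + ξ * Real.exp ((ε + b) / kBT) ≤ 2 := by linarith
  have hnum : (0:ℝ) ≤ (a + 1) * (ε + b) := by positivity
  have hterm2 : (0:ℝ) ≤ a * max (ε - b) 0 / (1 + ξ * Real.exp (max (ε - b) 0 / kBT)) :=
    div_nonneg (by positivity) hd2.le
  have h1 : (a + 1) * (ε + b) / 2 ≤ (a + 1) * (ε + b) / (1 + ξ * Real.exp ((ε + b) / kBT)) := by
    gcongr
  linarith

end PointwiseLemmas

section IntegrabilityLemmas

lemma key_bound (c1 c2 d : ℝ) (hc1 : 0 ≤ c1) (hc2 : 0 ≤ c2) (hd : 0 < d)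
    {t : ℝ} (ht : 0 ≤ t) :
    (c1 * t + c2) * (1 + t) ^ 3 ≤ (16 * (c1 + c2) * (1 + 24 / d ^ 4)) * Real.exp (d * t) := by
  have he1 : 1 ≤ Real.exp (d * t) := Real.one_le_exp (by positivity)
  have he4 : (d * t) ^ 4 / 24 ≤ Real.exp (d * t) := by
    have := Real.pow_div_factorial_le_exp (d*t) (by positivity) 4
    norm_num [Nat.factorial] at this
    linarith
  have ht4 : t ^ 4 ≤ 24 / d ^ 4 * Real.exp (d * t) := by
    have heq : t ^ 4 = 24 / d ^ 4 * ((d * t) ^ 4 / 24) := by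
      field_simp
    rw [heq]
    exact mul_le_mul_of_nonneg_left he4 (by positivity)
  have s1 : c1 * t + c2 ≤ (c1 + c2) * (1 + t) := by nlinarith [mul_nonneg hc2 ht]
  have s2 : (1 + t) ^ 4 ≤ 16 * (1 + t ^ 4) := by
    nlinarith [sq_nonneg (t - 1), sq_nonneg (t ^ 2 - 1), sq_nonneg (t ^ 2 - t), sq_nonneg t,
      mul_nonneg (mul_nonneg ht ht) ht]
  have h13 : (0:ℝ) ≤ (1 + t) ^ 3 := by positivity
  have hpoly : (c1 * t + c2) * (1 + t) ^ 3 ≤ 16 * (c1 + c2) * (1 + t ^ 4) := by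
    calc (c1 * t + c2) * (1 + t) ^ 3 ≤ (c1 + c2) * (1 + t) * (1 + t) ^ 3 :=
          mul_le_mul_of_nonneg_right s1 h13
      _ = (c1 + c2) * (1 + t) ^ 4 := by ring
      _ ≤ (c1 + c2) * (16 * (1 + t ^ 4)) := by
          exact mul_le_mul_of_nonneg_left s2 (by positivity)
      _ = 16 * (c1 + c2) * (1 + t ^ 4) := by ring
  have hfin : 16 * (c1 + c2) * (1 + t ^ 4) ≤
      (16 * (c1 + c2) * (1 + 24 / d ^ 4)) * Real.exp (d * t) := by
    have h16 : (0:ℝ) ≤ 16 * (c1 + c2) := by positivity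
    calc 16 * (c1 + c2) * (1 + t ^ 4)
        ≤ 16 * (c1 + c2) * (Real.exp (d * t) + 24 / d ^ 4 * Real.exp (d * t)) :=
          mul_le_mul_of_nonneg_left (add_le_add he1 ht4) h16
      _ = (16 * (c1 + c2) * (1 + 24 / d ^ 4)) * Real.exp (d * t) := by ring
  linarith

lemma integrable_linexp (c1 c2 d : ℝ) (hc1 : 0 ≤ c1) (hc2 : 0 ≤ c2) (hd : 0 < d) :
    Integrable (fun k : EuclideanSpace ℝ (Fin 2) =>
      (c1 * ‖k‖ + c2) * Real.exp (-(d * ‖k‖))) volume := by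
  set K := 16 * (c1 + c2) * (1 + 24 / d ^ 4) with hKdef
  have base : Integrable (fun k : EuclideanSpace ℝ (Fin 2) => (1 + ‖k‖) ^ (-(3:ℝ))) volume :=
    integrable_one_add_norm (by rw [finrank_euclideanSpace]; norm_num)
  refine (base.const_mul K).mono' ?_ (Filter.Eventually.of_forall fun k => ?_)
  · exact (Continuous.aestronglyMeasurable (by fun_prop))
  · have ht : (0:ℝ) ≤ ‖k‖ := norm_nonneg k
    have h1t : (0:ℝ) < 1 + ‖k‖ := by linarith
    rw [Real.norm_eq_abs, abs_of_nonneg (by positivity)]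
    rw [show (-(3:ℝ)) = -((3:ℕ):ℝ) by norm_num, Real.rpow_neg h1t.le, Real.rpow_natCast]
    rw [Real.exp_neg, ← div_eq_mul_inv, ← div_eq_mul_inv,
      div_le_div_iff₀ (Real.exp_pos _) (by positivity)]
    exact key_bound c1 c2 d hc1 hc2 hd ht

end IntegrabilityLemmas

/-- **Divergence of the collision integral as `μ → +∞`.** With `ε(k) = ħv_F·|k|`,
for `f : ℝ² → ℝ` measurable with values in `[0,1]` and `k ↦ ε(k)·f(k)` integrable,
`lim_{μ → +∞} ∫_{ℝ²} λ(ε(k), exp(−μ/k_BT); a, b; f(k)) dk = +∞`. -/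
theorem lam_integral_tendsto_atTop_mu
    (kBT hvF : ℝ) (hkBT : 0 < kBT) (hhvF : 0 < hvF)
    (a b : ℝ) (ha : 0 ≤ a) (hb : 0 ≤ b)
    (f : EuclideanSpace ℝ (Fin 2) → ℝ) (hfmeas : Measurable f)
    (hf01 : ∀ k, 0 ≤ f k ∧ f k ≤ 1)
    (hint : Integrable (fun k => hvF * ‖k‖ * f k) volume) :
    Tendsto (fun μ => ∫ k : EuclideanSpace ℝ (Fin 2),
        lam kBT (hvF * ‖k‖) (Real.exp (-μ / kBT)) a b (f k)) atTop atTop := by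
  set C1 := (a + 1) + a * Real.exp (b / kBT) with hC1def
  set C2 := (a + 1) * b with hC2def
  have hC1 : 0 ≤ C1 := by rw [hC1def]; positivity
  have hC2 : 0 ≤ C2 := by rw [hC2def]; positivity
  -- integrability of f
  have hF : Integrable f volume := by
    have hnf : Integrable (fun k : EuclideanSpace ℝ (Fin 2) => ‖k‖ * f k) volume := by
      have h := hint.const_mul hvF⁻¹
      refine h.congr (Filter.Eventually.of_forall fun k => ?_)
      field_simp
    have hind : Integrable ((Metric.closedBall (0 : EuclideanSpace ℝ (Fin 2)) 1).indicator
        (fun _ => (1:ℝ))) volume := by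
      rw [integrable_indicator_iff measurableSet_closedBall]
      exact (integrableOn_const_iff (by finiteness)).mpr (Or.inr measure_closedBall_lt_top)
    refine (hind.add hnf).mono' hfmeas.aestronglyMeasurable
      (Filter.Eventually.of_forall fun k => ?_)
    obtain ⟨h0, h1⟩ := hf01 k
    rw [Real.norm_eq_abs, abs_of_nonneg h0]
    simp only [Pi.add_apply]
    by_cases hk : ‖k‖ ≤ 1
    · have hmem : k ∈ Metric.closedBall (0 : EuclideanSpace ℝ (Fin 2)) 1 := by
        simpa [Metric.mem_closedBall, dist_zero_right] using hk
      rw [Set.indicator_of_mem hmem]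
      nlinarith [norm_nonneg k, mul_nonneg (norm_nonneg k) h0]
    · have hmem : k ∉ Metric.closedBall (0 : EuclideanSpace ℝ (Fin 2)) 1 := by
        simpa [Metric.mem_closedBall, dist_zero_right] using hk
      rw [Set.indicator_of_notMem hmem]
      push_neg at hk
      nlinarith [mul_le_mul_of_nonneg_right hk.le h0]
  have hBf : Integrable (fun k : EuclideanSpace ℝ (Fin 2) =>
      C1 * (hvF * ‖k‖ * f k) + C2 * f k) volume := (hint.const_mul C1).add (hF.const_mul C2)
  set D := ∫ k : EuclideanSpace ℝ (Fin 2), (C1 * (hvF * ‖k‖ * f k) + C2 * f k) with hDdef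
  -- volume of balls
  have hball : ∀ r : ℝ, 0 ≤ r →
      volume (Metric.ball (0 : EuclideanSpace ℝ (Fin 2)) r) = ENNReal.ofReal (π * r ^ 2) := by
    intro r hr
    rw [EuclideanSpace.volume_ball]
    have hcard : (Fintype.card (Fin 2)) = 2 := by simp
    rw [hcard]
    have h2 : ((2:ℕ):ℝ) / 2 + 1 = 2 := by norm_num
    rw [h2, Real.Gamma_two, Real.sq_sqrt Real.pi_pos.le]
    rw [← ENNReal.ofReal_pow hr, ← ENNReal.ofReal_mul (by positivity)]
    rw [div_one, mul_comm]
  rw [tendsto_atTop]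
  intro M
  -- choose R
  have htendR : Tendsto (fun R : ℝ => hvF / 2 * (π * R ^ 2 - π)) atTop atTop := by
    apply Tendsto.const_mul_atTop (by positivity : (0:ℝ) < hvF / 2)
    simpa [sub_eq_add_neg] using tendsto_atTop_add_const_right atTop (-π)
      ((tendsto_pow_atTop two_ne_zero).const_mul_atTop Real.pi_pos)
  obtain ⟨R, hRge, hR1⟩ :=
    ((htendR.eventually_ge_atTop (M + D)).and (eventually_ge_atTop (1:ℝ))).exists
  filter_upwards [eventually_ge_atTop (hvF * R + b)] with μ hμ
  set ξ := Real.exp (-μ / kBT) with hξdef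
  have hξ : 0 < ξ := Real.exp_pos _
  -- integrability of Ψ
  have hΨmeas : Measurable (fun k : EuclideanSpace ℝ (Fin 2) => psi kBT (hvF * ‖k‖) ξ a b) := by
    unfold psi; fun_prop
  have hΨ : Integrable (fun k : EuclideanSpace ℝ (Fin 2) => psi kBT (hvF * ‖k‖) ξ a b)
      volume := by
    have hG : Integrable (fun k : EuclideanSpace ℝ (Fin 2) =>
        ((C1 * hvF) * ‖k‖ + C2) * Real.exp (-(hvF / kBT * ‖k‖))) volume :=
      integrable_linexp _ _ _ (by positivity) hC2 (by positivity)
    refine (hG.div_const ξ).mono' hΨmeas.aestronglyMeasurable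
      (Filter.Eventually.of_forall fun k => ?_)
    have hε : (0:ℝ) ≤ hvF * ‖k‖ := by positivity
    rw [Real.norm_eq_abs, abs_of_nonneg (psi_nonneg hε hξ.le ha hb)]
    have hle := psi_le (kBT := kBT) (ε := hvF * ‖k‖) hkBT hε hξ ha hb
    rw [← hC1def, ← hC2def] at hle
    calc psi kBT (hvF * ‖k‖) ξ a b
        ≤ (C1 * (hvF * ‖k‖) + C2) * Real.exp (-(hvF * ‖k‖ / kBT)) / ξ := hle
      _ = ((C1 * hvF) * ‖k‖ + C2) * Real.exp (-(hvF / kBT * ‖k‖)) / ξ := by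
          rw [show hvF * ‖k‖ / kBT = hvF / kBT * ‖k‖ by ring]; ring_nf
  -- integrability of Λ
  have hΛmeas : Measurable (fun k : EuclideanSpace ℝ (Fin 2) =>
      lam kBT (hvF * ‖k‖) ξ a b (f k)) := by
    unfold lam psi; fun_prop
  have hΛ : Integrable (fun k : EuclideanSpace ℝ (Fin 2) =>
      lam kBT (hvF * ‖k‖) ξ a b (f k)) volume := by
    refine (hΨ.add hBf).mono' hΛmeas.aestronglyMeasurable
      (Filter.Eventually.of_forall fun k => ?_)
    have hε : (0:ℝ) ≤ hvF * ‖k‖ := by positivity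
    rw [Real.norm_eq_abs]
    have habs := abs_lam_le (kBT := kBT) (ε := hvF * ‖k‖) hkBT hε hξ ha hb
      (hf01 k).1 (hf01 k).2
    rw [← hC1def, ← hC2def] at habs
    have heq : f k * (C1 * (hvF * ‖k‖) + C2) = C1 * (hvF * ‖k‖ * f k) + C2 * f k := by ring
    simp only [Pi.add_apply]
    linarith
  -- ∫Λ ≥ ∫Ψ − D
  have hmono1 : ∫ k : EuclideanSpace ℝ (Fin 2),
      (psi kBT (hvF * ‖k‖) ξ a b - (C1 * (hvF * ‖k‖ * f k) + C2 * f k)) ≤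
      ∫ k : EuclideanSpace ℝ (Fin 2), lam kBT (hvF * ‖k‖) ξ a b (f k) := by
    refine integral_mono (hΨ.sub hBf) hΛ (fun k => ?_)
    have hε : (0:ℝ) ≤ hvF * ‖k‖ := by positivity
    have hge := lam_ge (kBT := kBT) (ε := hvF * ‖k‖) (φ := f k) hkBT hε hξ ha hb (hf01 k).1
    rw [← hC1def, ← hC2def] at hge
    have heq : f k * (C1 * (hvF * ‖k‖) + C2) = C1 * (hvF * ‖k‖ * f k) + C2 * f k := by ring
    simp only
    linarith
  have hsplit : ∫ k : EuclideanSpace ℝ (Fin 2),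
      (psi kBT (hvF * ‖k‖) ξ a b - (C1 * (hvF * ‖k‖ * f k) + C2 * f k)) =
      (∫ k : EuclideanSpace ℝ (Fin 2), psi kBT (hvF * ‖k‖) ξ a b) - D :=
    integral_sub hΨ hBf
  -- shell lower bound for ∫Ψ
  set S := Metric.ball (0 : EuclideanSpace ℝ (Fin 2)) R \
      Metric.ball (0 : EuclideanSpace ℝ (Fin 2)) 1 with hSdef
  have hSmeas : MeasurableSet S := measurableSet_ball.diff measurableSet_ball
  have hIndInt : Integrable (S.indicator fun _ => hvF / 2) volume := by
    rw [integrable_indicator_iff hSmeas]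
    refine (integrableOn_const_iff (by finiteness)).mpr (Or.inr ?_)
    exact (measure_mono Set.diff_subset).trans_lt measure_ball_lt_top
  have hmono2 : ∫ k : EuclideanSpace ℝ (Fin 2), S.indicator (fun _ => hvF / 2) k ≤
      ∫ k : EuclideanSpace ℝ (Fin 2), psi kBT (hvF * ‖k‖) ξ a b := by
    refine integral_mono hIndInt hΨ (fun k => ?_)
    have hε : (0:ℝ) ≤ hvF * ‖k‖ := by positivity
    simp only
    by_cases hk : k ∈ S
    · rw [Set.indicator_of_mem hk]
      obtain ⟨hkR, hk1⟩ := hk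
      have hnorm1 : 1 ≤ ‖k‖ := by
        have := hk1
        rw [Metric.mem_ball, dist_zero_right] at this
        exact le_of_not_gt this
      have hnormR : ‖k‖ < R := by
        have := hkR
        rwa [Metric.mem_ball, dist_zero_right] at this
      have hsmall : ξ * Real.exp ((hvF * ‖k‖ + b) / kBT) ≤ 1 := by
        rw [hξdef, ← Real.exp_add, Real.exp_le_one_iff]
        have harg : -μ / kBT + (hvF * ‖k‖ + b) / kBT = (hvF * ‖k‖ + b - μ) / kBT := by ring
        rw [harg]
        apply div_nonpos_of_nonpos_of_nonneg _ hkBT.le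
        have : hvF * ‖k‖ ≤ hvF * R := by nlinarith
        linarith
      have hlb := psi_lb (kBT := kBT) (ε := hvF * ‖k‖) hε hξ.le ha hb hsmall
      have hstep : hvF / 2 ≤ (a + 1) * (hvF * ‖k‖ + b) / 2 := by
        nlinarith [mul_nonneg ha (add_nonneg hε hb),
          mul_le_mul_of_nonneg_left hnorm1 hhvF.le]
      linarith
    · rw [Set.indicator_of_notMem hk]
      exact psi_nonneg hε hξ.le ha hb
  -- value of the shell integral
  have hvolS : volume S = ENNReal.ofReal (π * R ^ 2 - π) := by
    rw [hSdef, measure_diff (Metric.ball_subset_ball hR1)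
      measurableSet_ball.nullMeasurableSet
      (by rw [hball 1 zero_le_one]; exact ENNReal.ofReal_ne_top)]
    rw [hball R (by linarith), hball 1 zero_le_one]
    rw [← ENNReal.ofReal_sub _ (by positivity)]
    norm_num
  have hIndVal : ∫ k : EuclideanSpace ℝ (Fin 2), S.indicator (fun _ => hvF / 2) k =
      hvF / 2 * (π * R ^ 2 - π) := by
    rw [integral_indicator_const _ hSmeas, measureReal_def, hvolS, smul_eq_mul,
      ENNReal.toReal_ofReal (by nlinarith [Real.pi_pos, sq_nonneg (R - 1)] :
        (0:ℝ) ≤ π * R ^ 2 - π)]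
    ring
  linarith
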